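/- Let (Ω,ℬ,μ) be a probability space and τ : Ω → Ω a measure-preserving transformation that is ergodic. Then for every A ∈ ℬ with μ(A) > 0 and every integer n ≥ 1 there exists B ∈ ℬ such that the sets B, τ⁻¹(B), …, τ^{-(n-1)}(B) are pairwise disjoint and μ(⋃_{i=0}^{n-1} τ^{-i}(B)) ≥ 1 − (n−1)·μ(A). -/

import Mathlib

open MeasureTheory Set ENNReal

/-- **Kakutani–Rokhlin lemma (ε-free version) for ergodic measure-preserving systems.**
For every measurable `A` with `μ A > 0` and every `n ≥ 1` there is a measurable `B` whose
first `n` preimage-iterates are pairwise disjoint and whose tower covers at least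
`1 - (n-1)·μ A` of the space. -/
theorem kakutani_rokhlin_measure_free {Ω : Type*} [MeasurableSpace Ω] (μ : Measure Ω)
    [IsProbabilityMeasure μ] (τ : Ω → Ω) (hτ : Measurable τ)
    (hmp : ∀ A : Set Ω, MeasurableSet A → μ (τ ⁻¹' A) = μ A)
    (herg : ∀ A : Set Ω, MeasurableSet A → μ (symmDiff (τ ⁻¹' A) A) = 0 →
      μ A = 0 ∨ μ A = 1)
    (A : Set Ω) (hA : MeasurableSet A) (hApos : 0 < μ A) (n : ℕ) (hn : 1 ≤ n) :
    ∃ B : Set Ω, MeasurableSet B ∧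
      (∀ i j : ℕ, i < n → j < n → i ≠ j → Disjoint (τ^[i] ⁻¹' B) (τ^[j] ⁻¹' B)) ∧
      1 - ((n - 1 : ℕ) : ℝ≥0∞) * μ A ≤ μ (⋃ i ∈ Finset.range n, τ^[i] ⁻¹' B) := by
  classical
  -- first hitting time sets
  set E : ℕ → Set Ω := fun m => (τ^[m] ⁻¹' A) ∩ ⋂ k ∈ Finset.range m, (τ^[k] ⁻¹' A)ᶜ with hE
  have hmemE : ∀ m x, x ∈ E m ↔ τ^[m] x ∈ A ∧ ∀ k < m, τ^[k] x ∉ A := by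
    intro m x
    simp [hE, Finset.mem_range]
  have hEmeas : ∀ m, MeasurableSet (E m) := by
    intro m
    exact ((hτ.iterate m) hA).inter
      (MeasurableSet.biInter (Set.to_countable _) (fun k _ => ((hτ.iterate k) hA).compl)
        |>.congr rfl) |>.congr rfl
  -- iterated preimage of A has same measure
  have hiter : ∀ m, μ (τ^[m] ⁻¹' A) = μ A := by
    intro m
    induction m with
    | zero => simp
    | succ m ih =>
      have : τ^[m+1] ⁻¹' A = τ ⁻¹' (τ^[m] ⁻¹' A) := by
        rw [Function.iterate_succ, Set.preimage_comp]
      rw [this, hmp _ ((hτ.iterate m) hA), ih]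
  have hEle : ∀ m, μ (E m) ≤ μ A := by
    intro m
    calc μ (E m) ≤ μ (τ^[m] ⁻¹' A) := measure_mono (Set.inter_subset_left)
      _ = μ A := hiter m
  -- shift lemma for hitting times
  have hshift : ∀ (x : Ω) (m d : ℕ), d ≤ m → x ∈ E m → τ^[d] x ∈ E (m - d) := by
    intro x m d hdm hx
    rw [hmemE] at hx ⊢
    obtain ⟨h1, h2⟩ := hx
    constructor
    · rw [← Function.iterate_add_apply]
      rwa [Nat.sub_add_cancel hdm]
    · intro k hk
      rw [← Function.iterate_add_apply]
      exact h2 (k + d) (by omega)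
  -- uniqueness of hitting time
  have huniq : ∀ (x : Ω) (m m' : ℕ), x ∈ E m → x ∈ E m' → m = m' := by
    intro x m m' hm hm'
    rw [hmemE] at hm hm'
    by_contra hne
    rcases Nat.lt_or_ge m m' with h | h
    · exact hm'.2 m h hm.1
    · exact hm.2 m' (by omega) hm'.1
  -- the base of the tower
  refine ⟨⋃ j : ℕ, E (j * n + (n - 1)), MeasurableSet.iUnion fun j => hEmeas _, ?_, ?_⟩
  · -- disjointness
    have key : ∀ i j : ℕ, i < j → j < n → ∀ x : Ω,
        τ^[i] x ∈ (⋃ j : ℕ, E (j * n + (n - 1))) →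
        τ^[j] x ∈ (⋃ j : ℕ, E (j * n + (n - 1))) → False := by
      intro i j hij hjn x hxi hxj
      simp only [Set.mem_iUnion] at hxi hxj
      obtain ⟨a, ha⟩ := hxi
      obtain ⟨b, hb⟩ := hxj
      have hd : j - i ≤ a * n + (n - 1) := by
        have : j - i ≤ n - 1 := by omega
        omega
      have := hshift _ _ (j - i) hd ha
      rw [← Function.iterate_add_apply] at this
      have hji : j - i + i = j := by omega
      rw [hji] at this
      have heq := huniq _ _ _ hb this
      -- b * n + (n-1) = a * n + (n-1) - (j-i)
      have h1 : a * n = b * n + (j - i) := by omega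
      have hab : b < a := by
        by_contra hba
        push_neg at hba
        have : a * n ≤ b * n := Nat.mul_le_mul_right n hba
        omega
      have h2 : (a - b) * n = j - i := by
        rw [Nat.sub_mul]; omega
      have : n ≤ (a - b) * n := Nat.le_mul_of_pos_left n (by omega)
      omega
    intro i j hi hj hne
    rw [Set.disjoint_left]
    intro x hxi hxj
    rcases Nat.lt_or_ge i j with h | h
    · exact key i j h hj x hxi hxj
    · exact key j i (by omega) hi x hxj hxi
  · -- measure bound
    set B := ⋃ j : ℕ, E (j * n + (n - 1)) with hB
    set U := ⋃ i ∈ Finset.range n, τ^[i] ⁻¹' B with hUdef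
    have hUmeas : MeasurableSet U :=
      MeasurableSet.biUnion (Set.to_countable _)
        (fun i _ => (hτ.iterate i) (MeasurableSet.iUnion fun j => hEmeas _))
    set N : Set Ω := ⋂ k : ℕ, (τ^[k] ⁻¹' A)ᶜ with hNdef
    have hNmeas : MeasurableSet N :=
      MeasurableSet.iInter fun k => ((hτ.iterate k) hA).compl
    -- N is null
    have hNnull : μ N = 0 := by
      have hsub : N ⊆ τ ⁻¹' N := by
        intro x hx
        simp only [hNdef, Set.mem_iInter, Set.mem_compl_iff, Set.mem_preimage] at hx ⊢
        intro k
        rw [← Function.iterate_succ_apply]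
        exact hx (k + 1)
      have hmeq : μ (τ ⁻¹' N) = μ N := hmp N hNmeas
      have hdiff : μ (τ ⁻¹' N \ N) = 0 := by
        rw [measure_diff hsub hNmeas.nullMeasurableSet (measure_ne_top μ N), hmeq,
          tsub_self]
      have hsd : μ (symmDiff (τ ⁻¹' N) N) = 0 := by
        rw [symmDiff_of_ge hsub]
        exact hdiff
      rcases herg N hNmeas hsd with h | h
      · exact h
      · exfalso
        have hNA : N ⊆ Aᶜ := by
          intro x hx
          simp only [hNdef, Set.mem_iInter, Set.mem_compl_iff] at hx ⊢
          have := hx 0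
          simpa using this
        have h1 : μ N ≤ μ Aᶜ := measure_mono hNA
        rw [measure_compl hA (measure_ne_top μ A)] at h1
        rw [h] at h1
        rw [measure_univ] at h1
        have hlt : (1 : ℝ≥0∞) - μ A < 1 :=
          ENNReal.sub_lt_self one_ne_top one_ne_zero hApos.ne'
        exact absurd (lt_of_le_of_lt h1 hlt) (lt_irrefl _)
    -- coverage: Uᶜ ⊆ N ∪ ⋃_{m < n-1} E m
    have hcov : Uᶜ ⊆ N ∪ ⋃ m ∈ Finset.range (n - 1), E m := by
      intro x hx
      by_cases hxN : x ∈ N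
      · exact Or.inl hxN
      · right
        simp only [hNdef, Set.mem_iInter, Set.mem_compl_iff, Set.mem_preimage,
          not_forall, not_not] at hxN
        have hex : ∃ k, τ^[k] x ∈ A := hxN
        set m := Nat.find hex with hm
        have hxm : x ∈ E m := by
          rw [hmemE]
          exact ⟨Nat.find_spec hex, fun k hk => Nat.find_min hex hk⟩
        by_cases hmn : m < n - 1
        · simp only [Set.mem_iUnion, Finset.mem_range]
          exact ⟨m, hmn, hxm⟩
        · exfalso
          push_neg at hmn
          -- x ∈ U
          apply hx
          set i := (m - (n - 1)) % n with hi
          have hin : i < n := Nat.mod_lt _ (by omega)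
          have him : i ≤ m - (n - 1) := Nat.mod_le _ _
          have hdm : n * ((m - (n - 1)) / n) + i = m - (n - 1) := Nat.div_add_mod _ _
          set q := (m - (n - 1)) / n with hq
          have hmi : m - i = q * n + (n - 1) := by
            have : n * q = q * n := Nat.mul_comm _ _
            omega
          have := hshift x m i (by omega) hxm
          rw [hmi] at this
          simp only [hUdef, Set.mem_iUnion, Finset.mem_range]
          exact ⟨i, hin, Set.mem_iUnion.mpr ⟨q, this⟩⟩
    -- measure of complement
    have hcomp : μ Uᶜ ≤ ((n - 1 : ℕ) : ℝ≥0∞) * μ A := by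
      calc μ Uᶜ ≤ μ (N ∪ ⋃ m ∈ Finset.range (n - 1), E m) := measure_mono hcov
        _ ≤ μ N + μ (⋃ m ∈ Finset.range (n - 1), E m) := measure_union_le _ _
        _ = μ (⋃ m ∈ Finset.range (n - 1), E m) := by rw [hNnull, zero_add]
        _ ≤ ∑ m ∈ Finset.range (n - 1), μ (E m) := measure_biUnion_finset_le _ _
        _ ≤ ∑ m ∈ Finset.range (n - 1), μ A := Finset.sum_le_sum fun m _ => hEle m
        _ = ((n - 1 : ℕ) : ℝ≥0∞) * μ A := by
            rw [Finset.sum_const, Finset.card_range, nsmul_eq_mul]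
    -- conclude
    have htotal : μ U + μ Uᶜ = 1 := by
      rw [measure_add_measure_compl hUmeas, measure_univ]
    rw [tsub_le_iff_right]
    calc (1 : ℝ≥0∞) = μ U + μ Uᶜ := htotal.symm
      _ ≤ μ U + ((n - 1 : ℕ) : ℝ≥0∞) * μ A := add_le_add_right hcomp _
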